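/- Assume q is odd and α ∈ F with α ≠ 0. Then the Lie algebra {y ∈ Mat_4(F) : tr(y) = 0 and [C_{[2,1,1]}(α), y] = 0} (an F-Lie subalgebra of the 4×4 matrices under the commutator bracket [x,y] = xy − yx) is isomorphic as an F-Lie algebra to gl_3(F), the Lie algebra of all 3×3 matrices over F with the commutator bracket. -/

import Mathlib

attribute [local instance 100] LieRing.ofAssociativeRing

section stmt12aux
variable {F : Type*} [Field F]

/-- Forward map: the lower-right `3×3` block in a basis diagonalizing `C_{[2,1,1]}(α)`. -/
def fmSL4 (α : F) (y : Matrix (Fin 4) (Fin 4) F) : Matrix (Fin 3) (Fin 3) F :=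
  !![y 1 1, y 0 2, y 0 3;
     -(4*α) * y 2 1, y 2 2, y 2 3;
     -(4*α) * y 3 1, y 3 2, y 3 3]

/-- Inverse map. -/
def gmSL4 (α : F) (X : Matrix (Fin 3) (Fin 3) F) : Matrix (Fin 4) (Fin 4) F :=
  !![-(X 0 0 + X 1 1 + X 2 2), (-(X 0 0 + X 1 1 + X 2 2) - X 0 0)/(4*α), X 0 1, X 0 2;
     0, X 0 0, -(4*α)*X 0 1, -(4*α)*X 0 2;
     0, -X 1 0/(4*α), X 1 1, X 1 2;
     0, -X 2 0/(4*α), X 2 1, X 2 2]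

variable (α : F) (y : Matrix (Fin 4) (Fin 4) F) (X : Matrix (Fin 3) (Fin 3) F)

lemma fm00 : fmSL4 α y 0 0 = y 1 1 := rfl
lemma fm01 : fmSL4 α y 0 1 = y 0 2 := rfl
lemma fm02 : fmSL4 α y 0 2 = y 0 3 := rfl
lemma fm10 : fmSL4 α y 1 0 = -(4*α) * y 2 1 := rfl
lemma fm11 : fmSL4 α y 1 1 = y 2 2 := rfl
lemma fm12 : fmSL4 α y 1 2 = y 2 3 := rfl
lemma fm20 : fmSL4 α y 2 0 = -(4*α) * y 3 1 := rfl
lemma fm21 : fmSL4 α y 2 1 = y 3 2 := rfl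
lemma fm22 : fmSL4 α y 2 2 = y 3 3 := rfl

lemma gm00 : gmSL4 α X 0 0 = -(X 0 0 + X 1 1 + X 2 2) := rfl
lemma gm01 : gmSL4 α X 0 1 = (-(X 0 0 + X 1 1 + X 2 2) - X 0 0)/(4*α) := rfl
lemma gm02 : gmSL4 α X 0 2 = X 0 1 := rfl
lemma gm03 : gmSL4 α X 0 3 = X 0 2 := rfl
lemma gm10 : gmSL4 α X 1 0 = 0 := rfl
lemma gm11 : gmSL4 α X 1 1 = X 0 0 := rfl
lemma gm12 : gmSL4 α X 1 2 = -(4*α)*X 0 1 := rfl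
lemma gm13 : gmSL4 α X 1 3 = -(4*α)*X 0 2 := rfl
lemma gm20 : gmSL4 α X 2 0 = 0 := rfl
lemma gm21 : gmSL4 α X 2 1 = -X 1 0/(4*α) := rfl
lemma gm22 : gmSL4 α X 2 2 = X 1 1 := rfl
lemma gm23 : gmSL4 α X 2 3 = X 1 2 := rfl
lemma gm30 : gmSL4 α X 3 0 = 0 := rfl
lemma gm31 : gmSL4 α X 3 1 = -X 2 0/(4*α) := rfl
lemma gm32 : gmSL4 α X 3 2 = X 2 1 := rfl
lemma gm33 : gmSL4 α X 3 3 = X 2 2 := rfl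


lemma finmk3_2 (h : 2 < 3) : (⟨2, h⟩ : Fin 3) = 2 := rfl
lemma finmk4_2 (h : 2 < 4) : (⟨2, h⟩ : Fin 4) = 2 := rfl
lemma finmk4_3 (h : 3 < 4) : (⟨3, h⟩ : Fin 4) = 3 := rfl

lemma fm_gm (hβ : 4*α ≠ 0) : fmSL4 α (gmSL4 α X) = X := by
  have hα' : α ≠ 0 := right_ne_zero_of_mul hβ
  have h4 : (4:F) ≠ 0 := left_ne_zero_of_mul hβ
  ext i j
  fin_cases i <;> fin_cases j <;>
    simp only [Fin.mk_zero, Fin.mk_one, finmk3_2, finmk4_2, finmk4_3, fm00, fm01, fm02, fm10, fm11, fm12, fm20, fm21, fm22,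
      gm00, gm01, gm02, gm03, gm10, gm11, gm12, gm13, gm20, gm21, gm22, gm23, gm30, gm31, gm32, gm33] <;>
    field_simp

lemma gm_fm (hβ : 4*α ≠ 0)
    (hT : y 0 0 + y 1 1 + y 2 2 + y 3 3 = 0)
    (hy10 : y 1 0 = 0) (hy20 : y 2 0 = 0) (hy30 : y 3 0 = 0)
    (hy11 : y 1 1 = y 0 0 - 4*α*y 0 1) (hy12 : y 1 2 = -(4*α)*y 0 2) (hy13 : y 1 3 = -(4*α)*y 0 3) :
    gmSL4 α (fmSL4 α y) = y := by
  have hα' : α ≠ 0 := right_ne_zero_of_mul hβ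
  have h4 : (4:F) ≠ 0 := left_ne_zero_of_mul hβ
  ext i j
  fin_cases i <;> fin_cases j <;>
    simp only [Fin.mk_zero, Fin.mk_one, finmk3_2, finmk4_2, finmk4_3, fm00, fm01, fm02, fm10, fm11, fm12, fm20, fm21, fm22,
      gm00, gm01, gm02, gm03, gm10, gm11, gm12, gm13, gm20, gm21, gm22, gm23, gm30, gm31, gm32,
      gm33, hy10, hy20, hy30, hy12, hy13] <;>
    first
      | rfl
      | linear_combination -hT
      | (field_simp <;> first
           | linear_combination -hT
           | linear_combination -hT - hy11
           | linear_combination hy11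
           | ring)

lemma fm_add (z : Matrix (Fin 4) (Fin 4) F) : fmSL4 α (y + z) = fmSL4 α y + fmSL4 α z := by
  ext i j
  fin_cases i <;> fin_cases j <;>
    simp only [Fin.mk_zero, Fin.mk_one, finmk3_2, finmk4_2, finmk4_3, Matrix.add_apply, fm00, fm01, fm02, fm10, fm11, fm12, fm20, fm21, fm22] <;> ring

lemma fm_smul (c : F) : fmSL4 α (c • y) = c • fmSL4 α y := by
  ext i j
  fin_cases i <;> fin_cases j <;>
    simp only [Fin.mk_zero, Fin.mk_one, finmk3_2, finmk4_2, finmk4_3, Matrix.smul_apply, smul_eq_mul, fm00, fm01, fm02, fm10, fm11, fm12, fm20, fm21, fm22] <;> ring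

lemma fm_lie (z : Matrix (Fin 4) (Fin 4) F)
    (hy10 : y 1 0 = 0) (hy20 : y 2 0 = 0) (hy30 : y 3 0 = 0)
    (hy11 : y 1 1 = y 0 0 - 4*α*y 0 1) (hy12 : y 1 2 = -(4*α)*y 0 2) (hy13 : y 1 3 = -(4*α)*y 0 3)
    (hz10 : z 1 0 = 0) (hz20 : z 2 0 = 0) (hz30 : z 3 0 = 0)
    (hz11 : z 1 1 = z 0 0 - 4*α*z 0 1) (hz12 : z 1 2 = -(4*α)*z 0 2) (hz13 : z 1 3 = -(4*α)*z 0 3) :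
    fmSL4 α ⁅y, z⁆ = ⁅fmSL4 α y, fmSL4 α z⁆ := by
  ext i j
  fin_cases i <;> fin_cases j <;>
    simp only [Fin.mk_zero, Fin.mk_one, finmk3_2, finmk4_2, finmk4_3, Ring.lie_def, Matrix.sub_apply, Matrix.mul_apply, Fin.sum_univ_four,
      Fin.sum_univ_three, fm00, fm01, fm02, fm10, fm11, fm12, fm20, fm21, fm22,
      hy10, hy20, hy30, hy11, hy12, hy13, hz10, hz20, hz30, hz11, hz12, hz13] <;>
    ring
end stmt12aux

/-- The Lie centralizer `{y ∈ Mat₄(F) : tr y = 0 ∧ ⁅a, y⁆ = 0}`, an `F`-Lie subalgebra of the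
`4×4` matrices with the commutator bracket. -/
def lieCentralizerSL4 (F : Type*) [Field F] (a : Matrix (Fin 4) (Fin 4) F) :
    LieSubalgebra F (Matrix (Fin 4) (Fin 4) F) where
  carrier := {y | Matrix.trace y = 0 ∧ ⁅a, y⁆ = 0}
  zero_mem' := by simp
  add_mem' := by
    intro y z hy hz
    exact ⟨by simp [Matrix.trace_add, hy.1, hz.1], by simp [lie_add, hy.2, hz.2]⟩
  smul_mem' := by
    intro c y hy
    exact ⟨by simp [Matrix.trace_smul, hy.1], by simp [lie_smul, hy.2]⟩
  lie_mem' := by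
    intro y z hy hz
    refine ⟨?_, ?_⟩
    · rw [Ring.lie_def, Matrix.trace_sub, Matrix.trace_mul_comm, sub_self]
    · rw [leibniz_lie, hy.2, hz.2]
      simp

lemma memSL4_iff (F : Type*) [Field F] (α : F) (y : Matrix (Fin 4) (Fin 4) F) :
    y ∈ lieCentralizerSL4 F (!![3 * α, 1, 0, 0; 0, -α, 0, 0; 0, 0, -α, 0; 0, 0, 0, -α]) ↔
      (y 0 0 + y 1 1 + y 2 2 + y 3 3 = 0 ∧ y 1 0 = 0 ∧ y 2 0 = 0 ∧ y 3 0 = 0 ∧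
       y 1 1 = y 0 0 - 4*α*y 0 1 ∧ y 1 2 = -(4*α)*y 0 2 ∧ y 1 3 = -(4*α)*y 0 3) := by
  have hmem : y ∈ lieCentralizerSL4 F (!![3 * α, 1, 0, 0; 0, -α, 0, 0; 0, 0, -α, 0; 0, 0, 0, -α])
      ↔ (Matrix.trace y = 0 ∧ ⁅(!![3 * α, 1, 0, 0; 0, -α, 0, 0; 0, 0, -α, 0; 0, 0, 0, -α] : Matrix (Fin 4) (Fin 4) F), y⁆ = 0) := Iff.rfl
  rw [hmem, Ring.lie_def, sub_eq_zero]
  constructor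
  · rintro ⟨hT, hc⟩
    have e00 := congrFun (congrFun hc 0) 0
    have e01 := congrFun (congrFun hc 0) 1
    have e02 := congrFun (congrFun hc 0) 2
    have e03 := congrFun (congrFun hc 0) 3
    have e21 := congrFun (congrFun hc 2) 1
    have e31 := congrFun (congrFun hc 3) 1
    simp [Matrix.mul_apply, Fin.sum_univ_four, Matrix.vecHead, Matrix.vecTail] at e00 e01 e02 e03 e21 e31
    refine ⟨by simpa [Matrix.trace, Fin.sum_univ_four] using hT, ?_, ?_, ?_, ?_, ?_, ?_⟩
    · linear_combination e00
    · linear_combination -e21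
    · linear_combination -e31
    · linear_combination e01
    · linear_combination e02
    · linear_combination e03
  · rintro ⟨hT, h10, h20, h30, h11, h12, h13⟩
    constructor
    · simpa [Matrix.trace, Fin.sum_univ_four] using hT
    · ext i j
      fin_cases i <;> fin_cases j <;>
        simp [Matrix.mul_apply, Fin.sum_univ_four, Matrix.vecHead, Matrix.vecTail, h10, h20, h30, h11, h12, h13] <;> ring

/-- Assume `q` is odd and `α ∈ F`, `α ≠ 0`.  Then the Lie algebra
`{y ∈ Mat₄(F) : tr(y) = 0 ∧ [C_{[2,1,1]}(α), y] = 0}` is isomorphic as an `F`-Lie algebra to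
`gl₃(F)`, the Lie algebra of all `3×3` matrices over `F` with the commutator bracket. -/
theorem stmt_12 (F : Type*) [Field F] [Fintype F] (q : ℕ) (hq : Fintype.card F = q)
    (hodd : Odd q) (α : F) (hα : α ≠ 0) :
    Nonempty
      ((lieCentralizerSL4 F
          (!![3 * α, 1, 0, 0; 0, -α, 0, 0; 0, 0, -α, 0; 0, 0, 0, -α])) ≃ₗ⁅F⁆
        Matrix (Fin 3) (Fin 3) F) := by
  subst hq
  have h2 : (2:F) ≠ 0 := by
    intro h
    have hdvd : ringChar F ∣ 2 := (CharP.cast_eq_zero_iff F (ringChar F) 2).mp (by exact_mod_cast h)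
    have hc : ringChar F = 2 :=
      ((Nat.prime_two.eq_one_or_self_of_dvd _ hdvd).resolve_left CharP.ringChar_ne_one)
    have := FiniteField.even_card_iff_char_two.mp hc
    rw [Nat.odd_iff] at hodd; omega
  have hβ : 4*α ≠ 0 := by
    have h4 : (4:F) = 2*2 := by norm_num
    exact mul_ne_zero (by rw [h4]; exact mul_ne_zero h2 h2) hα
  have hg : ∀ X : Matrix (Fin 3) (Fin 3) F,
      gmSL4 α X ∈ lieCentralizerSL4 F (!![3 * α, 1, 0, 0; 0, -α, 0, 0; 0, 0, -α, 0; 0, 0, 0, -α]) := by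
    intro X
    have hdiv : ∀ c : F, 4*α*(c/(4*α)) = c := fun c => by have h4 : (4:F) ≠ 0 := left_ne_zero_of_mul hβ; field_simp
    rw [memSL4_iff]
    refine ⟨?_, ?_, ?_, ?_, ?_, ?_, ?_⟩
    case refine_5 =>
      simp only [gm00, gm01, gm11]
      rw [hdiv]
      ring
    all_goals
      simp only [gm00, gm01, gm02, gm03, gm10, gm11, gm12, gm13, gm20, gm21, gm22, gm23,
        gm30, gm31, gm32, gm33] <;>
      first
        | rfl
        | ring
        | (field_simp <;> ring)
  exact ⟨{
    toFun := fun y => fmSL4 α y.1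
    map_add' := fun y z => fm_add α y.1 z.1
    map_smul' := fun c y => fm_smul α y.1 c
    map_lie' := by
      intro y z
      obtain ⟨hTy, hy10, hy20, hy30, hy11, hy12, hy13⟩ := (memSL4_iff F α y.1).mp y.2
      obtain ⟨hTz, hz10, hz20, hz30, hz11, hz12, hz13⟩ := (memSL4_iff F α z.1).mp z.2
      exact fm_lie α y.1 z.1 hy10 hy20 hy30 hy11 hy12 hy13 hz10 hz20 hz30 hz11 hz12 hz13
    invFun := fun X => ⟨gmSL4 α X, hg X⟩
    left_inv := by
      intro y
      obtain ⟨hTy, hy10, hy20, hy30, hy11, hy12, hy13⟩ := (memSL4_iff F α y.1).mp y.2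
      exact Subtype.ext (gm_fm α y.1 hβ hTy hy10 hy20 hy30 hy11 hy12 hy13)
    right_inv := fun X => fm_gm α X hβ }⟩
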